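/- arXiv:2512.08119 — 3 statements merged into one kernel-verified Lean document; each statement's English description precedes it below -/
import Mathlib

section
/- Let q ∈ (0,1), let a ∈ ℂ be nonzero, let b,c,d ∈ ℂ, and let n ∈ ℤ≥0. Then for all x ∈ ℂ: (1 − abcd·q^{2n}) · (1 − a e^{ix})(1 − a e^{−ix}) · p_n(cos x; qa, b, c, d | q) = −a · p_{n+1}(cos x; a, b, c, d | q) + (1 − ab q^{n})(1 − ac q^{n})(1 − ad q^{n}) · p_n(cos x; a, b, c, d | q). -/
open Complex Finset

/-- q-Pochhammer symbol `(a;q)_k = ∏_{j=0}^{k-1} (1 - a q^j)`. -/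
noncomputable def qPoch (q a : ℂ) (k : ℕ) : ℂ := ∏ j ∈ Finset.range k, (1 - a * q ^ j)

/-- Askey–Wilson polynomial `p_n(cos x; a₁,a₂,a₃,a₄ | q)` as a function of `x ∈ ℂ`. -/
noncomputable def awPoly (q a₁ a₂ a₃ a₄ : ℂ) (n : ℕ) (x : ℂ) : ℂ :=
  a₁ ^ (-(n : ℤ)) * ∑ k ∈ Finset.range (n + 1),
    qPoch q (q ^ (-(n : ℤ))) k * qPoch q (a₁ * a₂ * a₃ * a₄ * q ^ ((n : ℤ) - 1)) k *
      qPoch q (a₁ * Complex.exp (Complex.I * x)) k *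
      qPoch q (a₁ * Complex.exp (-(Complex.I * x))) k * q ^ k / qPoch q q k *
      (qPoch q (a₁ * a₂ * q ^ k) (n - k) * qPoch q (a₁ * a₃ * q ^ k) (n - k) *
        qPoch q (a₁ * a₄ * q ^ k) (n - k))

@[simp] lemma qPoch_zero (q a : ℂ) : qPoch q a 0 = 1 := Finset.prod_range_zero _

lemma qPoch_succ (q a : ℂ) (k : ℕ) :
    qPoch q a (k + 1) = qPoch q a k * (1 - a * q ^ k) := Finset.prod_range_succ _ _

lemma qPoch_succ' (q a : ℂ) (k : ℕ) :
    qPoch q a (k + 1) = (1 - a) * qPoch q (a * q) k := by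
  rw [qPoch, qPoch, Finset.prod_range_succ']
  simp only [pow_zero, mul_one]
  rw [mul_comm]
  congr 1
  refine Finset.prod_congr rfl fun j _ => ?_
  rw [pow_succ]
  ring

lemma qPoch_qq_ne_zero {q : ℂ} (hone : ∀ j : ℕ, (1 : ℂ) - q * q ^ j ≠ 0) (k : ℕ) :
    qPoch q q k ≠ 0 :=
  Finset.prod_ne_zero_iff.mpr fun j _ => hone j

noncomputable def awT (q a b c d u v : ℂ) (n k : ℕ) : ℂ :=
  qPoch q (q ^ (-(n : ℤ))) k * qPoch q (a * b * c * d * q ^ ((n : ℤ) - 1)) k *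
    qPoch q (a * u) k * qPoch q (a * v) k * q ^ k / qPoch q q k *
    (qPoch q (a * b * q ^ k) (n - k) * qPoch q (a * c * q ^ k) (n - k) *
      qPoch q (a * d * q ^ k) (n - k))

lemma awPoly_eq (q a b c d : ℂ) (n : ℕ) (x : ℂ) :
    awPoly q a b c d n x = a ^ (-(n : ℤ)) * ∑ k ∈ Finset.range (n + 1),
      awT q a b c d (Complex.exp (Complex.I * x)) (Complex.exp (-(Complex.I * x))) n k := rfl

lemma key0 (q a b c d u v : ℂ) (n : ℕ) :
    awT q a b c d u v (n + 1) 0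
      = (1 - a * b * q ^ n) * (1 - a * c * q ^ n) * (1 - a * d * q ^ n) *
          awT q a b c d u v n 0 := by
  simp only [awT, Nat.sub_zero, pow_zero, mul_one, qPoch_zero, qPoch_succ]
  ring

lemma key_top (q a b c d u v : ℂ) (hq : q ≠ 0)
    (hone : ∀ j : ℕ, (1:ℂ) - q * q ^ j ≠ 0) (n : ℕ) :
    q ^ (-(n:ℤ)) * (1 - a * b * c * d * q ^ (2*n)) * ((1 - a * u) * (1 - a * v)) *
      awT q (q*a) b c d u v n n
    = -(awT q a b c d u v (n+1) (n+1)) := by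
  have hz3 : (q:ℂ) ^ (((n+1:ℕ):ℤ) - 1) = q ^ n := by
    rw [show ((n+1:ℕ):ℤ) - 1 = (n:ℤ) by push_cast; ring, zpow_natCast]
  have hz2 : (q:ℂ) ^ (-((n+1:ℕ):ℤ)) * q = q ^ (-(n:ℤ)) := by
    rw [← zpow_add_one₀ hq]; congr 1; push_cast; ring
  have harg1 : (q*a) * b * c * d * q ^ ((n:ℤ) - 1) = a * b * c * d * q ^ n := by
    rw [zpow_sub_one₀ hq, zpow_natCast]; field_simp
  have harg2 : (q*a) * u = a * u * q := by ring
  have harg3 : (q*a) * v = a * v * q := by ring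
  have hQ := qPoch_qq_ne_zero hone n
  simp only [awT, Nat.sub_self, qPoch_zero, harg1, harg2, harg3, hz3]
  rw [qPoch_succ' q (q ^ (-((n+1:ℕ):ℤ))), hz2,
      qPoch_succ q (a*b*c*d*q^n), qPoch_succ' q (a*u), qPoch_succ' q (a*v),
      qPoch_succ q q]
  simp only [zpow_neg, zpow_natCast]
  have h1 : (1:ℂ) - q ^ n * q ≠ 0 := by rw [mul_comm]; exact hone n
  rw [pow_succ]
  field_simp [hQ, h1]
  ring

lemma key_mid (q a b c d u v : ℂ) (hq : q ≠ 0)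
    (hone : ∀ j : ℕ, (1:ℂ) - q * q ^ j ≠ 0) (n k : ℕ) (hkn : k < n) :
    q ^ (-(n:ℤ)) * (1 - a * b * c * d * q ^ (2*n)) * ((1 - a * u) * (1 - a * v)) *
      awT q (q*a) b c d u v n k
    = (1 - a * b * q ^ n) * (1 - a * c * q ^ n) * (1 - a * d * q ^ n) *
        awT q a b c d u v n (k+1)
      - awT q a b c d u v (n+1) (k+1) := by
  obtain ⟨m, rfl⟩ : ∃ m, n = k + 1 + m := ⟨n - (k+1), by omega⟩
  have he1 : k + 1 + m - k = m + 1 := by omega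
  have he2 : k + 1 + m - (k + 1) = m := by omega
  have he3 : k + 1 + m + 1 - (k + 1) = m + 1 := by omega
  have hz3 : (q:ℂ) ^ (((k+1+m+1:ℕ):ℤ) - 1) = q ^ (((k+1+m:ℕ):ℤ) - 1) * q := by
    rw [← zpow_add_one₀ hq]; congr 1; push_cast; ring
  have hz2 : (q:ℂ) ^ (-((k+1+m+1:ℕ):ℤ)) * q = q ^ (-((k+1+m:ℕ):ℤ)) := by
    rw [← zpow_add_one₀ hq]; congr 1; push_cast; ring
  have hz5 : (q:ℂ) ^ (((k+1+m:ℕ):ℤ) - 1) = q ^ ((k+m:ℕ)) := by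
    rw [show ((k+1+m:ℕ):ℤ) - 1 = ((k+m:ℕ):ℤ) by push_cast; ring, zpow_natCast]
  have harg1 : (q*a) * b * c * d * q ^ (((k+1+m:ℕ):ℤ) - 1)
      = a * b * c * d * q ^ (((k+1+m:ℕ):ℤ) - 1) * q := by ring
  have harg4 : a * b * c * d * (q ^ (((k+1+m:ℕ):ℤ) - 1) * q)
      = a * b * c * d * q ^ (((k+1+m:ℕ):ℤ) - 1) * q := by ring
  have harg2 : (q*a) * u = a * u * q := by ring
  have harg3 : (q*a) * v = a * v * q := by ring
  have hargb : (q*a) * b * q ^ k = a * b * q ^ (k+1) := by ring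
  have hargc : (q*a) * c * q ^ k = a * c * q ^ (k+1) := by ring
  have hargd : (q*a) * d * q ^ k = a * d * q ^ (k+1) := by ring
  have hQ := qPoch_qq_ne_zero hone k
  have p1 : (q:ℂ) ^ (k+1+m) ≠ 0 := pow_ne_zero _ hq
  have p2 : (q:ℂ) ^ (k+1+m+1) ≠ 0 := pow_ne_zero _ hq
  simp only [awT, he1, he2, he3, hz3, harg1, harg4, harg2, harg3, hargb, hargc, hargd]
  simp only [qPoch_succ' q (q ^ (-((k+1+m+1:ℕ):ℤ))), hz2,
    qPoch_succ q (q ^ (-((k+1+m:ℕ):ℤ))),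
    qPoch_succ' q (a * b * c * d * q ^ (((k+1+m:ℕ):ℤ) - 1)),
    qPoch_succ q (a * b * c * d * q ^ (((k+1+m:ℕ):ℤ) - 1) * q),
    qPoch_succ' q (a * u), qPoch_succ' q (a * v), qPoch_succ q q,
    qPoch_succ q (a * b * q ^ (k+1)), qPoch_succ q (a * c * q ^ (k+1)),
    qPoch_succ q (a * d * q ^ (k+1))]
  simp only [hz5, zpow_neg, zpow_natCast]
  field_simp [hQ, hone k]
  ring

/-- The single-parameter-shift relation (eq. `PhijPn=` of the paper) for the
Askey–Wilson polynomials: shifting only the first parameter `a ↦ qa`. -/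
theorem askey_wilson_one_parameter_shift
    (q : ℝ) (hq0 : 0 < q) (hq1 : q < 1)
    (a b c d : ℂ) (ha : a ≠ 0) (n : ℕ) (x : ℂ) :
    (1 - a * b * c * d * (q : ℂ) ^ (2 * n)) *
      ((1 - a * Complex.exp (Complex.I * x)) * (1 - a * Complex.exp (-(Complex.I * x)))) *
      awPoly (q : ℂ) ((q : ℂ) * a) b c d n x
    = -a * awPoly (q : ℂ) a b c d (n + 1) x
      + (1 - a * b * (q : ℂ) ^ n) * (1 - a * c * (q : ℂ) ^ n) * (1 - a * d * (q : ℂ) ^ n) *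
          awPoly (q : ℂ) a b c d n x := by
  have hq : (q:ℂ) ≠ 0 := Complex.ofReal_ne_zero.mpr hq0.ne'
  have hone : ∀ j : ℕ, (1:ℂ) - (q:ℂ) * (q:ℂ) ^ j ≠ 0 := by
    intro j
    have hle : q ^ j ≤ 1 := pow_le_one₀ hq0.le hq1.le
    have h1 : q * q ^ j < 1 := by nlinarith
    have h2 : ((1 - q * q ^ j : ℝ) : ℂ) = 1 - (q:ℂ) * (q:ℂ) ^ j := by push_cast; ring
    rw [← h2, Complex.ofReal_ne_zero]
    exact (sub_pos.mpr h1).ne'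
  simp only [awPoly_eq]
  set u := Complex.exp (Complex.I * x) with hu
  set v := Complex.exp (-(Complex.I * x)) with hv
  have hmid : ∑ k ∈ Finset.range n,
        (q:ℂ) ^ (-(n:ℤ)) * (1 - a * b * c * d * (q:ℂ) ^ (2*n)) * ((1 - a*u) * (1 - a*v)) *
          awT (q:ℂ) ((q:ℂ)*a) b c d u v n k
      = (1 - a*b*(q:ℂ)^n) * (1 - a*c*(q:ℂ)^n) * (1 - a*d*(q:ℂ)^n) *
          (∑ k ∈ Finset.range n, awT (q:ℂ) a b c d u v n (k+1))
        - ∑ k ∈ Finset.range n, awT (q:ℂ) a b c d u v (n+1) (k+1) := by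
    rw [Finset.mul_sum, ← Finset.sum_sub_distrib]
    exact Finset.sum_congr rfl fun k hk =>
      key_mid (q:ℂ) a b c d u v hq hone n k (Finset.mem_range.mp hk)
  have hsum : ∑ k ∈ Finset.range (n+1),
        (q:ℂ) ^ (-(n:ℤ)) * (1 - a * b * c * d * (q:ℂ) ^ (2*n)) * ((1 - a*u) * (1 - a*v)) *
          awT (q:ℂ) ((q:ℂ)*a) b c d u v n k
      = -(∑ k ∈ Finset.range (n+1+1), awT (q:ℂ) a b c d u v (n+1) k)
        + (1 - a*b*(q:ℂ)^n) * (1 - a*c*(q:ℂ)^n) * (1 - a*d*(q:ℂ)^n) *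
            ∑ k ∈ Finset.range (n+1), awT (q:ℂ) a b c d u v n k := by
    rw [Finset.sum_range_succ, hmid, key_top (q:ℂ) a b c d u v hq hone n,
      Finset.sum_range_succ' (fun k => awT (q:ℂ) a b c d u v (n+1) k) (n+1),
      Finset.sum_range_succ (fun i => awT (q:ℂ) a b c d u v (n+1) (i+1)) n,
      Finset.sum_range_succ' (fun k => awT (q:ℂ) a b c d u v n k) n,
      key0]
    ring
  rw [← Finset.mul_sum] at hsum
  have hA : a ^ (-((n+1:ℕ):ℤ)) * a = a ^ (-(n:ℤ)) := by
    rw [← zpow_add_one₀ ha]; congr 1; push_cast; ring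
  have hsplit : ((q:ℂ) * a) ^ (-(n:ℤ)) = (q:ℂ) ^ (-(n:ℤ)) * a ^ (-(n:ℤ)) := mul_zpow _ _ _
  rw [hsplit]
  linear_combination a ^ (-(n:ℤ)) * hsum
    + (∑ k ∈ Finset.range (n+1+1), awT (q:ℂ) a b c d u v (n+1) k) * hA
end

section
/- Let a ∈ ℂ, let φ ∈ ℝ with sin φ ≠ 0, and let n ∈ ℤ≥0. Then for all x ∈ ℂ: (a+ix)(a−ix) · P_n^{(a+1)}(x;φ) = (1/(4 sin²φ)) · [ (n+1)(n+2) P_{n+2}^{(a)}(x;φ) − 2 cos φ · (n+1)(2a+n+1) P_{n+1}^{(a)}(x;φ) + (2a+n)(2a+n+1) P_n^{(a)}(x;φ) ]. -/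
open Complex Finset

/-- Rising Pochhammer symbol `(x)_m = x (x+1) ⋯ (x+m-1)`. -/
noncomputable def poch (x : ℂ) (m : ℕ) : ℂ := ∏ j ∈ Finset.range m, (x + j)

/-- Meixner–Pollaczek polynomial `P_n^{(a)}(x;φ)` as a function of `x ∈ ℂ`. -/
noncomputable def mpPoly (a : ℂ) (φ : ℝ) (n : ℕ) (x : ℂ) : ℂ :=
  Complex.exp (n * Complex.I * φ) / (n.factorial : ℂ) *
    ∑ k ∈ Finset.range (n + 1),
      poch (-(n : ℂ)) k * poch (a + Complex.I * x) k * poch (2 * a + k) (n - k) /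
        (k.factorial : ℂ) * (1 - Complex.exp (-(2 * Complex.I * φ))) ^ k

lemma poch_zero (x : ℂ) : poch x 0 = 1 := by simp [poch]

lemma poch_succ (x : ℂ) (m : ℕ) : poch x (m+1) = poch x m * (x + m) := by
  simp [poch, Finset.prod_range_succ]

lemma poch_add (x : ℂ) (p q : ℕ) : poch x (p+q) = poch x p * poch (x + p) q := by
  simp only [poch, Finset.prod_range_add]
  congr 1
  refine Finset.prod_congr rfl fun j _ => ?_
  push_cast; ring

lemma poch_one (x : ℂ) : poch x 1 = x := by simp [poch]

lemma poch_succ' (x : ℂ) (m : ℕ) : poch x (m+1) = x * poch (x+1) m := by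
  have := poch_add x 1 m
  rw [add_comm 1 m] at this
  simpa [poch_one] using this

lemma poch_neg_nat (n m : ℕ) (h : n < m) : poch (-(n:ℂ)) m = 0 := by
  apply Finset.prod_eq_zero (Finset.mem_range.mpr h)
  simp

-- unconditional decompositions of the "negative integer" pochhammers
lemma dec2 (n k : ℕ) : poch (-((n:ℂ)+2)) (k+2) = ((n:ℂ)+2)*((n:ℂ)+1) * poch (-(n:ℂ)) k := by
  rw [show k+2 = 2+k by omega, poch_add]
  rw [show (-((n:ℂ)+2) + ((2:ℕ):ℂ)) = -(n:ℂ) by push_cast; ring]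
  rw [show (2:ℕ) = 1+1 by rfl, poch_add, poch_one, poch_one]
  push_cast; ring

lemma dec1 (n k : ℕ) : poch (-((n:ℂ)+1)) (k+2) = -((n:ℂ)+1) * poch (-(n:ℂ)) k * (-(n:ℂ)+k) := by
  rw [poch_succ, poch_succ']
  rw [show (-((n:ℂ)+1) + 1) = -(n:ℂ) by ring]
  push_cast; ring

lemma dec1' (n k : ℕ) : poch (-((n:ℂ)+1)) (k+1) = -((n:ℂ)+1) * poch (-(n:ℂ)) k := by
  rw [poch_succ']
  rw [show (-((n:ℂ)+1) + 1) = -(n:ℂ) by ring]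

lemma dec0 (n k : ℕ) : poch (-(n:ℂ)) (k+2) = poch (-(n:ℂ)) k * (-(n:ℂ)+k) * (-(n:ℂ)+k+1) := by
  rw [poch_succ, poch_succ]
  push_cast; ring

lemma dec0' (n k : ℕ) : poch (-(n:ℂ)) (k+1) = poch (-(n:ℂ)) k * (-(n:ℂ)+k) := by
  rw [poch_succ]

-- key scalar identity A
lemma cIA (a : ℂ) (n k : ℕ) :
    poch (-((n:ℂ)+2)) (k+2) * poch (2*a + ((k:ℂ)+2)) (n-k) / (((k+2).factorial : ℕ) : ℂ)
    - 2*(2*a+(n:ℂ)+1) * (poch (-((n:ℂ)+1)) (k+2) * poch (2*a + ((k:ℂ)+2)) (n-(k+1)) / (((k+2).factorial : ℕ) : ℂ))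
    + (2*a+(n:ℂ))*(2*a+(n:ℂ)+1) * (poch (-(n:ℂ)) (k+2) * poch (2*a + ((k:ℂ)+2)) (n-(k+2)) / (((k+2).factorial : ℕ) : ℂ))
    = poch (-(n:ℂ)) k * poch (2*a+2+(k:ℂ)) (n-k) / ((k.factorial : ℕ) : ℂ) := by
  have hfac : (((k+2).factorial : ℕ) : ℂ) = ((k:ℂ)+2)*((k:ℂ)+1)*(k.factorial : ℂ) := by
    rw [Nat.factorial_succ, Nat.factorial_succ]; push_cast; ring
  have hk0 : ((k.factorial : ℕ) : ℂ) ≠ 0 := by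
    exact_mod_cast Nat.cast_ne_zero.mpr k.factorial_ne_zero
  have hk1 : ((k:ℂ)+1) ≠ 0 := by
    have : (((k+1:ℕ)):ℂ) ≠ 0 := Nat.cast_ne_zero.mpr (by omega)
    push_cast at this; exact this
  have hk2 : ((k:ℂ)+2) ≠ 0 := by
    have : (((k+2:ℕ)):ℂ) ≠ 0 := Nat.cast_ne_zero.mpr (by omega)
    push_cast at this; exact this
  have harg : (2*a+2+(k:ℂ)) = 2*a + ((k:ℂ)+2) := by ring
  rw [dec2, dec1, dec0, hfac, harg]
  rcases lt_or_ge n k with h | h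
  · simp [poch_neg_nat n k h]
  rcases Nat.lt_or_ge n (k+2) with h2 | h2
  · -- n = k or n = k+1
    rcases Nat.eq_or_lt_of_le h with hnk | hnk
    · -- n = k
      have : n = k := by omega
      subst this
      rw [Nat.sub_self, show n-(n+1) = 0 by omega, show n-(n+2) = 0 by omega, poch_zero]
      field_simp
      ring
    · -- n = k+1
      have : n = k+1 := by omega
      subst this
      rw [show k+1-k = 1 by omega, show k+1-(k+1) = 0 by omega, show k+1-(k+2) = 0 by omega,
        poch_one, poch_zero]
      push_cast
      field_simp
      ring
  · -- k+2 ≤ n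
    obtain ⟨r, hr⟩ := Nat.exists_eq_add_of_le h2
    subst hr
    rw [show k+2+r-k = r+2 by omega, show k+2+r-(k+1) = r+1 by omega,
      show k+2+r-(k+2) = r by omega]
    simp only [poch_succ]
    push_cast
    field_simp
    ring

-- key scalar identity B
lemma cIB (a : ℂ) (n k : ℕ) :
    -((2*a+(n:ℂ)+1) * (poch (-((n:ℂ)+1)) (k+1) * poch (2*a + ((k:ℂ)+1)) (n-k) / (((k+1).factorial : ℕ) : ℂ)))
    + (2*a+(n:ℂ))*(2*a+(n:ℂ)+1) * (poch (-(n:ℂ)) (k+1) * poch (2*a + ((k:ℂ)+1)) (n-(k+1)) / (((k+1).factorial : ℕ) : ℂ))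
    = poch (-(n:ℂ)) k * poch (2*a+2+(k:ℂ)) (n-k) * (2*a+(k:ℂ)+1) / ((k.factorial : ℕ) : ℂ) := by
  have hfac : (((k+1).factorial : ℕ) : ℂ) = ((k:ℂ)+1)*(k.factorial : ℂ) := by
    rw [Nat.factorial_succ]; push_cast; ring
  have hk0 : ((k.factorial : ℕ) : ℂ) ≠ 0 := by
    exact_mod_cast Nat.cast_ne_zero.mpr k.factorial_ne_zero
  have hk1 : ((k:ℂ)+1) ≠ 0 := by
    have : (((k+1:ℕ)):ℂ) ≠ 0 := Nat.cast_ne_zero.mpr (by omega)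
    push_cast at this; exact this
  rw [dec1', dec0', hfac]
  rcases lt_or_ge n k with h | h
  · simp [poch_neg_nat n k h]
  rcases Nat.eq_or_lt_of_le h with hnk | hnk
  · -- n = k
    have : n = k := by omega
    subst this
    rw [Nat.sub_self, show n-(n+1) = 0 by omega]
    simp only [poch_zero]
    field_simp
    ring
  · -- k < n, n = k+1+r
    obtain ⟨r, hr⟩ : ∃ r, n = k+1+r := ⟨n-(k+1), by omega⟩
    subst hr
    rw [show k+1+r-k = r+1 by omega, show k+1+r-(k+1) = r by omega,
      show ((k+1+r:ℕ):ℂ) = (k:ℂ)+1+(r:ℂ) from by push_cast; ring]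
    have h2 : poch (2*a+((k:ℂ)+1)) (r+1) = (2*a+((k:ℂ)+1)) * poch (2*a+2+(k:ℂ)) r := by
      rw [poch_succ']
      rw [show (2*a+((k:ℂ)+1)+1) = 2*a+2+(k:ℂ) by ring]
    have hrel : poch (2*a+((k:ℂ)+1)) r * (2*a+((k:ℂ)+1)+(r:ℂ)) = (2*a+((k:ℂ)+1)) * poch (2*a+2+(k:ℂ)) r := by
      rw [← h2, poch_succ]
    have hr1 : poch (2*a+((k:ℂ)+1)) (r+1) = poch (2*a+((k:ℂ)+1)) r * (2*a+((k:ℂ)+1)+(r:ℂ)) := by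
      rw [poch_succ]
    have hR : poch (2*a+2+(k:ℂ)) (r+1) = poch (2*a+2+(k:ℂ)) r * (2*a+2+(k:ℂ)+(r:ℂ)) := by
      rw [poch_succ]
    rw [hr1, hR]
    set P := poch (-((k:ℂ)+1+(r:ℂ))) k with hP
    set Q := poch (2*a+((k:ℂ)+1)) r with hQ
    set Y := poch (2*a+2+(k:ℂ)) r with hY
    field_simp
    linear_combination (((k:ℂ)+1) * P * (2*a+(k:ℂ)+2+(r:ℂ))) * hrel

-- boundary lemmas
lemma cIA0 (a : ℂ) (n : ℕ) :
    poch (2*a) (n+2) - 2*(2*a+(n:ℂ)+1)*poch (2*a) (n+1) + (2*a+(n:ℂ))*(2*a+(n:ℂ)+1)*poch (2*a) n = 0 := by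
  simp only [poch_succ]; push_cast; ring

lemma cIB0 (a : ℂ) (n : ℕ) :
    -((2*a+(n:ℂ)+1)*poch (2*a) (n+1)) + (2*a+(n:ℂ))*(2*a+(n:ℂ)+1)*poch (2*a) n = 0 := by
  simp only [poch_succ]; push_cast; ring

lemma cIA1 (a : ℂ) (n : ℕ) :
    -(-((n:ℂ)+2)*poch (2*a+1) (n+1)) + 2*(2*a+(n:ℂ)+1)*(-((n:ℂ)+1)*poch (2*a+1) n)
      - (2*a+(n:ℂ))*(2*a+(n:ℂ)+1)*((-(n:ℂ))*poch (2*a+1) (n-1)) = 0 := by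
  cases n with
  | zero => simp only [poch_succ]; simp [poch_zero]
  | succ m =>
    rw [show m+1-1 = m by omega]
    push_cast
    simp only [poch_succ]
    push_cast
    ring

noncomputable def aa (a : ℂ) (n k : ℕ) : ℂ :=
  poch (-(n:ℂ)) k * poch (2*a + (k:ℂ)) (n-k) / (k.factorial : ℂ)

noncomputable def cc (a : ℂ) (n k : ℕ) : ℂ :=
  poch (-(n:ℂ)) k * poch (2*a+2 + (k:ℂ)) (n-k) / (k.factorial : ℂ)

noncomputable def AA (a : ℂ) (n k : ℕ) : ℂ :=
  -(aa a (n+2) k) + 2*(2*a+(n:ℂ)+1)*(aa a (n+1) k) - (2*a+(n:ℂ))*(2*a+(n:ℂ)+1)*(aa a n k)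

noncomputable def BB (a : ℂ) (n k : ℕ) : ℂ :=
  -((2*a+(n:ℂ)+1)*(aa a (n+1) k)) + (2*a+(n:ℂ))*(2*a+(n:ℂ)+1)*(aa a n k)

lemma AA_zero (a : ℂ) (n : ℕ) : AA a n 0 = 0 := by
  simp only [AA, aa, Nat.sub_zero, Nat.factorial_zero, Nat.cast_zero, add_zero, Nat.cast_one,
    poch_zero, one_mul, div_one]
  linear_combination -(cIA0 a n)

lemma BB_zero (a : ℂ) (n : ℕ) : BB a n 0 = 0 := by
  simp only [BB, aa, Nat.sub_zero, Nat.factorial_zero, Nat.cast_zero, add_zero, Nat.cast_one,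
    poch_zero, one_mul, div_one]
  linear_combination cIB0 a n

lemma AA_one (a : ℂ) (n : ℕ) : AA a n 1 = 0 := by
  have h := cIA1 a n
  simp only [AA, aa, Nat.factorial_one, Nat.cast_one, div_one, poch_one,
    show n+2-1 = n+1 by omega, show n+1-1 = n by omega]
  push_cast
  linear_combination h

lemma AA_shift (a : ℂ) (n i : ℕ) : AA a n (i+2) = -(cc a n i) := by
  have h := cIA a n i
  simp only [AA, aa, cc, show n+2-(i+2) = n-i by omega, show n+1-(i+2) = n-(i+1) by omega]
  push_cast
  linear_combination -h

lemma BB_shift (a : ℂ) (n i : ℕ) : BB a n (i+1) = cc a n i * (2*a+(i:ℂ)+1) := by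
  have h := cIB a n i
  simp only [BB, aa, cc, show n+1-(i+1) = n-i by omega]
  push_cast
  linear_combination h

lemma cc_zero_of_lt (a : ℂ) (n k : ℕ) (h : n < k) : cc a n k = 0 := by
  simp [cc, poch_neg_nat n k h]

lemma main (a x t : ℂ) (n : ℕ) :
    (a + Complex.I*x) * (a - Complex.I*x) * t^2 *
      (∑ k ∈ Finset.range (n+1),
        poch (-(n:ℂ)) k * poch (a+1 + Complex.I*x) k * poch (2*(a+1) + (k:ℂ)) (n-k) / (k.factorial : ℂ) * t^k)
    = -((∑ k ∈ Finset.range (n+2+1),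
          poch (-((n+2:ℕ):ℂ)) k * poch (a + Complex.I*x) k * poch (2*a + (k:ℂ)) (n+2-k) / (k.factorial : ℂ) * t^k)
        - (2-t)*(2*a+(n:ℂ)+1) * (∑ k ∈ Finset.range (n+1+1),
          poch (-((n+1:ℕ):ℂ)) k * poch (a + Complex.I*x) k * poch (2*a + (k:ℂ)) (n+1-k) / (k.factorial : ℂ) * t^k)
        + (1-t)*(2*a+(n:ℂ))*(2*a+(n:ℂ)+1) * (∑ k ∈ Finset.range (n+1),
          poch (-(n:ℂ)) k * poch (a + Complex.I*x) k * poch (2*a + (k:ℂ)) (n-k) / (k.factorial : ℂ) * t^k)) := by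
  -- extend all sums to range (n+3)
  have hsub1 : Finset.range (n+1) ⊆ Finset.range (n+3) := by
    apply Finset.range_subset_range.mpr; omega
  have hsub2 : Finset.range (n+1+1) ⊆ Finset.range (n+3) := by
    apply Finset.range_subset_range.mpr; omega
  have eL : (∑ k ∈ Finset.range (n+1),
        poch (-(n:ℂ)) k * poch (a+1 + Complex.I*x) k * poch (2*(a+1) + (k:ℂ)) (n-k) / (k.factorial : ℂ) * t^k)
      = ∑ k ∈ Finset.range (n+3),
        poch (-(n:ℂ)) k * poch (a+1 + Complex.I*x) k * poch (2*(a+1) + (k:ℂ)) (n-k) / (k.factorial : ℂ) * t^k := by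
    apply Finset.sum_subset hsub1
    intro k _ hk
    have : n < k := by simp at hk; omega
    simp [poch_neg_nat n k this]
  have e0 : (∑ k ∈ Finset.range (n+1),
        poch (-(n:ℂ)) k * poch (a + Complex.I*x) k * poch (2*a + (k:ℂ)) (n-k) / (k.factorial : ℂ) * t^k)
      = ∑ k ∈ Finset.range (n+3),
        poch (-(n:ℂ)) k * poch (a + Complex.I*x) k * poch (2*a + (k:ℂ)) (n-k) / (k.factorial : ℂ) * t^k := by
    apply Finset.sum_subset hsub1
    intro k _ hk
    have : n < k := by simp at hk; omega
    simp [poch_neg_nat n k this]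
  have e1 : (∑ k ∈ Finset.range (n+1+1),
        poch (-((n+1:ℕ):ℂ)) k * poch (a + Complex.I*x) k * poch (2*a + (k:ℂ)) (n+1-k) / (k.factorial : ℂ) * t^k)
      = ∑ k ∈ Finset.range (n+3),
        poch (-((n+1:ℕ):ℂ)) k * poch (a + Complex.I*x) k * poch (2*a + (k:ℂ)) (n+1-k) / (k.factorial : ℂ) * t^k := by
    apply Finset.sum_subset hsub2
    intro k _ hk
    have : n+1 < k := by simp at hk; omega
    rw [poch_neg_nat (n+1) k this]
    simp
  rw [eL, e0, e1, show n+2+1 = n+3 from rfl]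
  -- turn both sides into single sums
  rw [Finset.mul_sum, Finset.mul_sum, Finset.mul_sum]
  rw [← Finset.sum_sub_distrib, ← Finset.sum_add_distrib, ← Finset.sum_neg_distrib]
  -- LHS termwise decomposition
  have hL : ∀ k ∈ Finset.range (n+3),
      (a + Complex.I*x) * (a - Complex.I*x) * t^2 *
        (poch (-(n:ℂ)) k * poch (a+1 + Complex.I*x) k * poch (2*(a+1) + (k:ℂ)) (n-k) / (k.factorial : ℂ) * t^k)
      = cc a n k * (2*a+(k:ℂ)+1) * poch (a + Complex.I*x) (k+1) * t^(k+2)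
        - cc a n k * poch (a + Complex.I*x) (k+2) * t^(k+2) := by
    intro k _
    have h1 : poch (a + Complex.I*x) (k+1) = (a + Complex.I*x) * poch (a+1 + Complex.I*x) k := by
      rw [poch_succ', show (a + Complex.I*x + 1) = a+1+Complex.I*x by ring]
    have h2 : poch (a + Complex.I*x) (k+2)
        = (a + Complex.I*x) * poch (a+1 + Complex.I*x) k * (a + Complex.I*x + ((k:ℂ)+1)) := by
      rw [show k+2 = (k+1)+1 from rfl, poch_succ, h1]
      push_cast; ring
    rw [h1, h2]
    simp only [cc, show (2*(a+1) + (k:ℂ)) = 2*a+2+(k:ℂ) by ring]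
    ring
  -- RHS termwise decomposition
  have hR : ∀ k ∈ Finset.range (n+3),
      -((poch (-((n+2:ℕ):ℂ)) k * poch (a + Complex.I*x) k * poch (2*a + (k:ℂ)) (n+2-k) / (k.factorial : ℂ) * t^k)
        - (2-t)*(2*a+(n:ℂ)+1) * (poch (-((n+1:ℕ):ℂ)) k * poch (a + Complex.I*x) k * poch (2*a + (k:ℂ)) (n+1-k) / (k.factorial : ℂ) * t^k)
        + (1-t)*(2*a+(n:ℂ))*(2*a+(n:ℂ)+1) * (poch (-(n:ℂ)) k * poch (a + Complex.I*x) k * poch (2*a + (k:ℂ)) (n-k) / (k.factorial : ℂ) * t^k))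
      = AA a n k * poch (a + Complex.I*x) k * t^k + BB a n k * poch (a + Complex.I*x) k * t^(k+1) := by
    intro k _
    simp only [AA, BB, aa]
    push_cast
    ring
  rw [Finset.sum_congr rfl hL, Finset.sum_congr rfl hR]
  rw [Finset.sum_sub_distrib, Finset.sum_add_distrib]
  have key1 : (∑ k ∈ Finset.range (n+3), AA a n k * poch (a + Complex.I*x) k * t^k)
      = -(∑ k ∈ Finset.range (n+3), cc a n k * poch (a + Complex.I*x) (k+2) * t^(k+2)) := by
    rw [show n+3 = (n+2)+1 from rfl, Finset.sum_range_succ' (fun k => AA a n k * poch (a + Complex.I*x) k * t^k) (n+2)]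
    rw [show n+2 = (n+1)+1 from rfl, Finset.sum_range_succ' (fun k => AA a n (k+1) * poch (a + Complex.I*x) (k+1) * t^(k+1)) (n+1)]
    simp only [zero_add, AA_zero, AA_one, AA_shift, zero_mul, add_zero]
    rw [Finset.sum_range_succ (fun k => cc a n k * poch (a + Complex.I*x) (k+2) * t^(k+2)) (n+2),
      Finset.sum_range_succ (fun k => cc a n k * poch (a + Complex.I*x) (k+2) * t^(k+2)) (n+1)]
    rw [cc_zero_of_lt a n (n+1) (by omega), cc_zero_of_lt a n (n+2) (by omega)]
    simp only [zero_mul, add_zero]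
    rw [← Finset.sum_neg_distrib]
    refine Finset.sum_congr rfl fun k _ => ?_
    rw [show k+1+1 = k+2 from rfl]
    ring
  have key2 : (∑ k ∈ Finset.range (n+3), BB a n k * poch (a + Complex.I*x) k * t^(k+1))
      = ∑ k ∈ Finset.range (n+3), cc a n k * (2*a+(k:ℂ)+1) * poch (a + Complex.I*x) (k+1) * t^(k+2) := by
    rw [show n+3 = (n+2)+1 from rfl, Finset.sum_range_succ' (fun k => BB a n k * poch (a + Complex.I*x) k * t^(k+1)) (n+2)]
    simp only [zero_add, BB_zero, BB_shift, zero_mul, add_zero]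
    rw [Finset.sum_range_succ (fun k => cc a n k * (2*a+(k:ℂ)+1) * poch (a + Complex.I*x) (k+1) * t^(k+2)) (n+2)]
    rw [cc_zero_of_lt a n (n+2) (by omega)]
    simp only [zero_mul, add_zero]
  rw [key1, key2]
  ring


set_option maxHeartbeats 1000000 in
/-- Eq. (21) of Ismail–Saad for the Meixner–Pollaczek polynomials (the Christoffel
relation `Φ̌ P̌_n(·;λ+2δ) = β_n Σ_k α_{n,k} P̌_{n+k}(·;λ)` of the paper). -/
theorem meixner_pollaczek_christoffel
    (a : ℂ) (φ : ℝ) (hφ : Real.sin φ ≠ 0) (n : ℕ) (x : ℂ) :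
    (a + Complex.I * x) * (a - Complex.I * x) * mpPoly (a + 1) φ n x
    = 1 / (4 * (Real.sin φ : ℂ) ^ 2) *
        (((n : ℂ) + 1) * ((n : ℂ) + 2) * mpPoly a φ (n + 2) x
          - 2 * (Real.cos φ : ℂ) * ((n : ℂ) + 1) * (2 * a + n + 1) * mpPoly a φ (n + 1) x
          + (2 * a + n) * (2 * a + n + 1) * mpPoly a φ n x) := by
  have hM := main a x (1 - Complex.exp (-(2*Complex.I*(φ:ℂ)))) n
  simp only [mpPoly]
  set E := Complex.exp (Complex.I * (φ:ℂ)) with hE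
  set t := 1 - Complex.exp (-(2*Complex.I*(φ:ℂ))) with ht
  have hE0 : E ≠ 0 := Complex.exp_ne_zero _
  have hexp : ∀ m : ℕ, Complex.exp ((m:ℂ) * Complex.I * (φ:ℂ)) = E^m := by
    intro m
    rw [hE, ← Complex.exp_nat_mul]
    congr 1; ring
  have h1 : E^2 * Complex.exp (-(2*Complex.I*(φ:ℂ))) = 1 := by
    rw [hE, ← Complex.exp_nat_mul, ← Complex.exp_add,
      show ((2:ℕ):ℂ) * (Complex.I*(φ:ℂ)) + -(2*Complex.I*(φ:ℂ)) = 0 by push_cast; ring]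
    exact Complex.exp_zero
  have hEt : E^2 * t = E^2 - 1 := by rw [ht]; linear_combination -h1
  have h2 : E * Complex.exp (-(Complex.I*(φ:ℂ))) = 1 := by
    rw [hE, ← Complex.exp_add, show Complex.I*(φ:ℂ) + -(Complex.I*(φ:ℂ)) = 0 by ring]
    exact Complex.exp_zero
  have hs : (Real.sin φ : ℂ) * (2*Complex.I) * E = E^2 * t := by
    have h2s := Complex.two_sin (φ:ℂ)
    rw [show -(φ:ℂ)*Complex.I = -(Complex.I*(φ:ℂ)) by ring,
      show (φ:ℂ)*Complex.I = Complex.I*(φ:ℂ) by ring, ← hE] at h2s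
    have hI := Complex.I_sq
    rw [← Complex.ofReal_sin] at h2s
    linear_combination (Complex.I*E/1) * h2s
      + ((Complex.exp (-(Complex.I*(φ:ℂ))) - E)*E) * hI - h2 - hEt
  have hc : 2*(Real.cos φ : ℂ) * E = E^2 * (2-t) := by
    have h2c := Complex.two_cos (φ:ℂ)
    rw [show -(φ:ℂ)*Complex.I = -(Complex.I*(φ:ℂ)) by ring,
      show (φ:ℂ)*Complex.I = Complex.I*(φ:ℂ) by ring, ← hE] at h2c
    rw [← Complex.ofReal_cos] at h2c
    linear_combination E * h2c + h2 - hEt - 2*h1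
  have hsC : (Real.sin φ : ℂ) ≠ 0 := Complex.ofReal_ne_zero.mpr hφ
  have ht0 : t ≠ 0 := by
    intro h
    have hz : (Real.sin φ:ℂ)*(2*Complex.I)*E = 0 := by rw [hs, h, mul_zero]
    have hnz : (Real.sin φ:ℂ)*(2*Complex.I)*E ≠ 0 :=
      mul_ne_zero (mul_ne_zero hsC (by simp [Complex.I_ne_zero])) hE0
    exact hnz hz
  clear_value E t
  have h4s : 4 * (Real.sin φ : ℂ)^2 = -(E^2*t^2) := by
    have hI := Complex.I_sq
    apply mul_right_cancel₀ (pow_ne_zero 2 hE0)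
    linear_combination (-((Real.sin φ:ℂ)*(2*Complex.I)*E + E^2*t)) * hs
      + 4*(Real.sin φ:ℂ)^2*E^2 * hI
  have hf1 : (((n+1).factorial : ℕ) : ℂ) = ((n:ℂ)+1) * ((n.factorial:ℕ):ℂ) := by
    rw [Nat.factorial_succ]; push_cast; ring
  have hf2 : (((n+2).factorial : ℕ) : ℂ) = ((n:ℂ)+2)*((n:ℂ)+1) * ((n.factorial:ℕ):ℂ) := by
    rw [Nat.factorial_succ, Nat.factorial_succ]; push_cast; ring
  have hfn : ((n.factorial : ℕ) : ℂ) ≠ 0 := by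
    exact_mod_cast Nat.cast_ne_zero.mpr n.factorial_ne_zero
  rw [hexp n, hexp (n+1), hexp (n+2), hf1, hf2, h4s,
    show E^(n+2) = E^n * E^2 from pow_add E n 2,
    show E^(n+1) = E^n * E from pow_succ E n]
  set SL := ∑ k ∈ Finset.range (n+1), poch (-(n:ℂ)) k * poch (a+1 + Complex.I*x) k * poch (2*(a+1) + (k:ℂ)) (n-k) / (k.factorial : ℂ) * t^k with hSL
  set S2 := ∑ k ∈ Finset.range (n+2+1), poch (-((n+2:ℕ):ℂ)) k * poch (a + Complex.I*x) k * poch (2*a + (k:ℂ)) (n+2-k) / (k.factorial : ℂ) * t^k with hS2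
  set S1 := ∑ k ∈ Finset.range (n+1+1), poch (-((n+1:ℕ):ℂ)) k * poch (a + Complex.I*x) k * poch (2*a + (k:ℂ)) (n+1-k) / (k.factorial : ℂ) * t^k with hS1
  set S0 := ∑ k ∈ Finset.range (n+1), poch (-(n:ℂ)) k * poch (a + Complex.I*x) k * poch (2*a + (k:ℂ)) (n-k) / (k.factorial : ℂ) * t^k with hS0
  clear_value SL S2 S1 S0
  clear hSL hS2 hS1 hS0 hexp h1 h2 hs hφ hsC
  set W := E^n with hW
  clear_value W
  rw [Complex.ofReal_cos] at hc
  have hn1 : ((n:ℂ)+1) ≠ 0 := by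
    have : (((n+1:ℕ)):ℂ) ≠ 0 := Nat.cast_ne_zero.mpr (by omega)
    push_cast at this; exact this
  have hn2 : ((n:ℂ)+2) ≠ 0 := by
    have : (((n+2:ℕ)):ℂ) ≠ 0 := Nat.cast_ne_zero.mpr (by omega)
    push_cast at this; exact this
  field_simp [hn1, hn2]
  rw [Complex.ofReal_cos]
  linear_combination (W*E^2) * hM
    + (-(W*(2*a+(n:ℂ)+1)*S1)) * hc
    + (W*(2*a+(n:ℂ))*(2*a+(n:ℂ)+1)*S0) * hEt
end

section
/- Let a ∈ ℂ, let φ ∈ ℝ, and let n ∈ ℤ≥0. Then for all x ∈ ℂ: (a+ix)(a−ix) · [ 2 P_{n+2}^{(a)}(x;φ) − P_{n+2}^{(a)}(x−i;φ) − P_{n+2}^{(a)}(x+i;φ) ] = (n+1)(n+2) P_{n+2}^{(a)}(x;φ) − 2 cos φ · (n+1)(2a+n+1) P_{n+1}^{(a)}(x;φ) + (2a+n)(2a+n+1) P_n^{(a)}(x;φ). -/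
open Complex Finset

lemma poch_neg_eq_zero {m k : ℕ} (h : m < k) : poch (-(m:ℂ)) k = 0 := by
  apply Finset.prod_eq_zero (Finset.mem_range.mpr h); simp

lemma L4 (m : ℂ) (j : ℕ) : m * poch (-m+1) j = (m - j) * poch (-m) j := by
  have h1 := poch_succ (-m) j
  have h2 := poch_succ' (-m) j
  linear_combination h2 - h1

lemma L3 (a u : ℂ) (m : ℕ) :
    u * (2*a - u) * (2 * poch u (m+1) - poch (u+1) (m+1) - poch (u-1) (m+1))
    = -((m:ℂ)+1)*m*(2*a+m) * poch u m + ((m:ℂ)+1)*m * poch u (m+1) := by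
  have h1 : poch u (m+2) = u * poch (u+1) (m+1) := poch_succ' u (m+1)
  have h2 : poch (u-1) (m+1) = (u-1) * poch u m := by
    have := poch_succ' (u-1) m; rwa [sub_add_cancel] at this
  have h3 : poch u (m+1) = poch u m * (u + m) := poch_succ u m
  have h4 : poch u (m+2) = poch u (m+1) * (u + m + 1) := by
    have := poch_succ u (m+1); push_cast at this; linear_combination this
  linear_combination (2*a-u)*h1 + (-(2*a-u))*h4 + (-(u*(2*a-u)))*h2 +
    (2*u*(2*a-u) - (2*a-u)*(u+(m:ℂ)+1) - (m:ℂ)*((m:ℂ)+1))*h3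

lemma L3u (a u : ℂ) (k : ℕ) :
    u * (2*a - u) * (2 * poch u k - poch (u+1) k - poch (u-1) k)
    = -(k:ℂ)*((k:ℂ)-1)*(2*a+(k:ℂ)-1) * poch u (k-1) + (k:ℂ)*((k:ℂ)-1) * poch u k := by
  cases k with
  | zero => simp only [poch, Finset.range_zero, Finset.prod_empty]; push_cast; ring
  | succ m =>
    have := L3 a u m
    push_cast
    ring_nf
    ring_nf at this
    linear_combination this

noncomputable def W (a z : ℂ) (N k : ℕ) : ℂ :=
  poch (-(N:ℂ)) k * poch (2*a + k) (N - k) / (k.factorial : ℂ) * z^k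

lemma W_zero (a z : ℂ) {N k : ℕ} (h : N < k) : W a z N k = 0 := by
  rw [W, poch_neg_eq_zero h]; ring

lemma alg_main (a z J T P1 P G Q2 Q1 Q R1 R0 F zj : ℂ)
    (hF : F ≠ 0) (hJ1 : J+1 ≠ 0) (hJT1 : J+T+1 ≠ 0) (hJT2 : J+T+2 ≠ 0)
    (e1 : P1 = P * (-(J+T+2)+J))
    (hG : (2*a+J)*G = Q*(2*a+J+T)*(2*a+J+T+1))
    (e4 : Q2 = Q1*(2*a+J+T+1))
    (e5 : Q1 = Q*(2*a+J+T))
    (e2 : (J+T+2)*R1 = (J+T+2-J)*P)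
    (e3 : (J+T+1)*R0 = (J+T+1-J)*R1) :
    P1*G/((J+1)*F)*(zj*z)*(-(J+1)*J*(2*a+J)) + P*Q2/F*zj*(J*(J-1))
    = (J+T+1)*(J+T+2)*(P*Q2/F*zj)
      - (J+T+1)*(J+T+2)*(2*a+(J+T)+1)*(2-z)*(R1*Q1/F*zj)
      + (J+T+1)*(J+T+2)*(2*a+(J+T))*(2*a+(J+T)+1)*(1-z)*(R0*Q/F*zj) := by
  have hR1 : R1 = (T+2)*P/(J+T+2) := by field_simp; linear_combination e2
  have hR0 : R0 = (T+1)*R1/(J+T+1) := by field_simp; linear_combination e3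
  subst e1 e4 e5 hR0 hR1
  field_simp
  linear_combination (P*J*zj*(T+2)*z) * hG

lemma alg_edge1 (a z M A2 B C F2 F zj : ℂ) (hF : F ≠ 0) (hM2 : M+2 ≠ 0)
    (hF2 : F2 = (M+2)*F)
    (eA : A2 = B * (-(M+2) + (M+1)))
    (eC : (M+2) * C = (M+2-(M+1)) * B) :
    A2*1/F2*(zj*z)*(-((M+1)+1)*(M+1)*(2*a+(M+1))) + B*(2*a+(M+1))/F*zj*((M+1)*((M+1)-1))
    = (M+1)*(M+2)*(B*(2*a+(M+1))/F*zj)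
      - (M+1)*(M+2)*(2*a+M+1)*(2-z)*(C*1/F*zj)
      + (M+1)*(M+2)*(2*a+M)*(2*a+M+1)*(1-z)*0 := by
  have hC : C = B/(M+2) := by rw [eq_div_iff hM2]; linear_combination eC
  subst hF2 eA hC
  field_simp
  ring

lemma coeff_id (a z : ℂ) (n j : ℕ) (hj : j ≤ n+2) :
    W a z (n+2) (j+1) * (-((j:ℂ)+1)*j*(2*a+j)) + W a z (n+2) j * ((j:ℂ)*((j:ℂ)-1))
    = ((n:ℂ)+1)*((n:ℂ)+2) * W a z (n+2) j
      - ((n:ℂ)+1)*((n:ℂ)+2)*(2*a+(n:ℂ)+1)*(2-z) * W a z (n+1) j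
      + ((n:ℂ)+1)*((n:ℂ)+2)*(2*a+(n:ℂ))*(2*a+(n:ℂ)+1)*(1-z) * W a z n j := by
  rcases Nat.lt_or_ge j (n+1) with h | h
  · obtain ⟨t, rfl⟩ : ∃ t, n = j + t := ⟨n - j, by omega⟩
    simp only [W]
    rw [show j+t+2-(j+1) = t+1 from by omega, show j+t+2-j = t+2 from by omega,
        show j+t+1-j = t+1 from by omega, show j+t-j = t from by omega,
        Nat.factorial_succ, pow_succ]
    push_cast
    rw [show (2*a+((j:ℂ)+1)) = 2*a+(j:ℂ)+1 from by ring]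
    have e1 := poch_succ (-((j:ℂ)+(t:ℂ)+2)) j
    have hG : (2*a+(j:ℂ)) * poch (2*a+(j:ℂ)+1) (t+1)
        = poch (2*a+(j:ℂ)) t * (2*a+(j:ℂ)+(t:ℂ)) * (2*a+(j:ℂ)+(t:ℂ)+1) := by
      have h1 := poch_succ' (2*a+(j:ℂ)) (t+1)
      have h2 := poch_succ (2*a+(j:ℂ)) (t+1)
      have h3 := poch_succ (2*a+(j:ℂ)) t
      push_cast at h2
      linear_combination h2 - h1 + (2*a+(j:ℂ)+(t:ℂ)+1)*h3
    have e4 : poch (2*a+(j:ℂ)) (t+2)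
        = poch (2*a+(j:ℂ)) (t+1) * (2*a+(j:ℂ)+(t:ℂ)+1) := by
      have := poch_succ (2*a+(j:ℂ)) (t+1); push_cast at this; linear_combination this
    have e5 := poch_succ (2*a+(j:ℂ)) t
    have e2 := L4 ((j:ℂ)+(t:ℂ)+2) j
    rw [show -((j:ℂ)+(t:ℂ)+2)+1 = -((j:ℂ)+(t:ℂ)+1) from by ring] at e2
    have e3 := L4 ((j:ℂ)+(t:ℂ)+1) j
    rw [show -((j:ℂ)+(t:ℂ)+1)+1 = -((j:ℂ)+(t:ℂ)) from by ring] at e3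
    have hF : (j.factorial : ℂ) ≠ 0 := Nat.cast_ne_zero.mpr j.factorial_ne_zero
    have hJ1 : ((j:ℂ)+1) ≠ 0 := by
      have : ((j+1:ℕ):ℂ) ≠ 0 := Nat.cast_ne_zero.mpr (Nat.succ_ne_zero j)
      push_cast at this; exact this
    have hJT1 : ((j:ℂ)+(t:ℂ)+1) ≠ 0 := by
      have : ((j+t+1:ℕ):ℂ) ≠ 0 := Nat.cast_ne_zero.mpr (by omega)
      push_cast at this; exact this
    have hJT2 : ((j:ℂ)+(t:ℂ)+2) ≠ 0 := by
      have : ((j+t+2:ℕ):ℂ) ≠ 0 := Nat.cast_ne_zero.mpr (by omega)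
      push_cast at this; exact this
    linear_combination alg_main _ z _ _ _ _ _ _ _ _ _ _ _ (z^j) hF hJ1 hJT1 hJT2 e1 hG e4 e5 e2 e3
  · obtain rfl | rfl : j = n+1 ∨ j = n+2 := by omega
    · rw [W_zero a z (show n < n+1 from by omega)]
      simp only [W]
      rw [show n+2-(n+1+1) = 0 from by omega, show n+2-(n+1) = 1 from by omega,
          show n+1-(n+1) = 0 from by omega]
      simp only [poch_zero, poch_one]
      rw [pow_succ]
      push_cast
      have eA := poch_succ (-((n:ℂ)+2)) (n+1)
      push_cast at eA
      have eC := L4 ((n:ℂ)+2) (n+1)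
      rw [show -((n:ℂ)+2)+1 = -((n:ℂ)+1) from by ring] at eC
      push_cast at eC
      have hF : ((n+1).factorial : ℂ) ≠ 0 := Nat.cast_ne_zero.mpr (n+1).factorial_ne_zero
      have hM2 : ((n:ℂ)+2) ≠ 0 := by
        have : ((n+2:ℕ):ℂ) ≠ 0 := Nat.cast_ne_zero.mpr (by omega)
        push_cast at this; exact this
      have hF2 : (((n+1+1).factorial : ℕ) : ℂ) = ((n:ℂ)+2) * ((n+1).factorial : ℂ) := by
        rw [Nat.factorial_succ]; push_cast; ring
      linear_combination alg_edge1 a z _ _ _ _ _ _ (z^(n+1)) hF hM2 hF2 eA eC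
    · rw [W_zero a z (show n+2 < n+2+1 from by omega),
          W_zero a z (show n+1 < n+2 from by omega),
          W_zero a z (show n < n+2 from by omega)]
      simp only [W]
      rw [show n+2-(n+2) = 0 from by omega, poch_zero]
      push_cast
      ring

lemma ext_sum (a u z : ℂ) {m M : ℕ} (h : m ≤ M) :
    ∑ k ∈ Finset.range (m+1), W a z m k * poch u k
    = ∑ k ∈ Finset.range (M+1), W a z m k * poch u k := by
  apply Finset.sum_subset (Finset.range_subset_range.mpr (by omega))
  intro k _ hk
  rw [W_zero a z (show m < k from by simp at hk; omega), zero_mul]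

lemma lhs_sum (a u z c : ℂ) (N : ℕ) :
    u*(2*a-u)*(2*(c * ∑ k ∈ Finset.range (N+1), W a z N k * poch u k)
      - c * ∑ k ∈ Finset.range (N+1), W a z N k * poch (u+1) k
      - c * ∑ k ∈ Finset.range (N+1), W a z N k * poch (u-1) k)
    = c * ∑ j ∈ Finset.range (N+1),
        (W a z N (j+1) * (-((j:ℂ)+1)*j*(2*a+j)) + W a z N j * ((j:ℂ)*((j:ℂ)-1))) * poch u j := by
  rw [Finset.mul_sum, Finset.mul_sum, Finset.mul_sum, Finset.mul_sum,
      ← Finset.sum_sub_distrib, ← Finset.sum_sub_distrib, Finset.mul_sum]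
  have hterm : ∀ k ∈ Finset.range (N+1),
      u*(2*a-u) * (2*(c*(W a z N k * poch u k)) - c*(W a z N k * poch (u+1) k)
        - c*(W a z N k * poch (u-1) k))
      = c*(W a z N k * (-(k:ℂ)*((k:ℂ)-1)*(2*a+(k:ℂ)-1) * poch u (k-1)))
        + c*(W a z N k * ((k:ℂ)*((k:ℂ)-1) * poch u k)) := by
    intro k _
    linear_combination (c * W a z N k) * L3u a u k
  rw [Finset.sum_congr rfl hterm, Finset.sum_add_distrib]
  have h1 : (∑ k ∈ Finset.range (N+1),
        c*(W a z N k * (-(k:ℂ)*((k:ℂ)-1)*(2*a+(k:ℂ)-1) * poch u (k-1))))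
      = ∑ j ∈ Finset.range (N+1), c*(W a z N (j+1) * (-((j:ℂ)+1)*j*(2*a+j) * poch u j)) := by
    rw [Finset.sum_range_succ', Finset.sum_range_succ]
    congr 1
    · apply Finset.sum_congr rfl; intro i _
      rw [show i+1-1 = i from rfl]
      push_cast
      ring
    · rw [W_zero a z (Nat.lt_succ_self N)]
      push_cast
      ring
  rw [h1]
  have h2 : ∀ j ∈ Finset.range (N+1),
      c*(W a z N (j+1) * (-((j:ℂ)+1)*j*(2*a+j) * poch u j))
        + c*(W a z N j * ((j:ℂ)*((j:ℂ)-1) * poch u j))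
      = c*((W a z N (j+1) * (-((j:ℂ)+1)*j*(2*a+j)) + W a z N j * ((j:ℂ)*((j:ℂ)-1))) * poch u j) := by
    intro j _; ring
  rw [← Finset.sum_add_distrib, Finset.sum_congr rfl h2, ← Finset.mul_sum]

lemma keyAux2 (a z co E1 E F1 M S : ℂ) (hF1 : F1 ≠ 0) (hM2 : M+2 ≠ 0)
    (hre : co * E1 = E * (2-z)) :
    co * (M+1) * (2*a+M+1) * (E1 / F1 * S)
    = E / ((M+2)*F1) * ((M+1)*(M+2)*(2*a+M+1)*(2-z) * S) := by
  field_simp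
  linear_combination ((M+1)*(2*a+M+1)*S) * hre

lemma keyAux3 (a z E0 E F0 F1 M S : ℂ) (hF0 : F0 ≠ 0) (hF1 : F1 ≠ 0) (hM2 : M+2 ≠ 0)
    (hf : F1 = (M+1)*F0) (hre0 : E0 = E*(1-z)) :
    (2*a+M)*(2*a+M+1)*(E0/F0*S) = E/((M+2)*F1)*((M+1)*(M+2)*(2*a+M)*(2*a+M+1)*(1-z)*S) := by
  subst hf
  have hM1 : M+1 ≠ 0 := left_ne_zero_of_mul hF1
  field_simp
  linear_combination ((2*a+M)*(2*a+M+1)*S) * hre0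

/-- The difference relation (Theorem `thm:sabunrel` of the paper) for the
Meixner–Pollaczek polynomials. -/
theorem meixner_pollaczek_difference_relation
    (a : ℂ) (φ : ℝ) (n : ℕ) (x : ℂ) :
    (a + Complex.I * x) * (a - Complex.I * x) *
      (2 * mpPoly a φ (n + 2) x - mpPoly a φ (n + 2) (x - Complex.I)
        - mpPoly a φ (n + 2) (x + Complex.I))
    = ((n : ℂ) + 1) * ((n : ℂ) + 2) * mpPoly a φ (n + 2) x
      - 2 * (Real.cos φ : ℂ) * ((n : ℂ) + 1) * (2 * a + n + 1) * mpPoly a φ (n + 1) x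
      + (2 * a + n) * (2 * a + n + 1) * mpPoly a φ n x := by
  set z : ℂ := 1 - Complex.exp (-(2 * Complex.I * (φ:ℂ))) with hzdef
  set u : ℂ := a + Complex.I * x with hudef
  have hmp : ∀ (m : ℕ) (y v : ℂ), a + Complex.I * y = v →
      mpPoly a φ m y = Complex.exp ((m:ℂ) * Complex.I * (φ:ℂ)) / (m.factorial : ℂ) *
        ∑ k ∈ Finset.range (m+1), W a z m k * poch v k := by
    intro m y v hv
    rw [mpPoly, hv]
    congr 1
    apply Finset.sum_congr rfl
    intro k _
    rw [W]
    ring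
  have h1 : a + Complex.I * (x - Complex.I) = u + 1 := by
    rw [hudef, mul_sub, Complex.I_mul_I]; ring
  have h2 : a + Complex.I * (x + Complex.I) = u - 1 := by
    rw [hudef, mul_add, Complex.I_mul_I]; ring
  rw [hmp (n+2) x u hudef.symm, hmp (n+2) (x - Complex.I) (u+1) h1,
      hmp (n+2) (x + Complex.I) (u-1) h2, hmp (n+1) x u hudef.symm,
      hmp n x u hudef.symm]
  have ha : a - Complex.I * x = 2*a - u := by rw [hudef]; ring
  rw [ha, lhs_sum a u z (Complex.exp (((n+2:ℕ):ℂ) * Complex.I * (φ:ℂ)) / ((n+2).factorial : ℂ)) (n+2),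
      ext_sum a u z (show n+1 ≤ n+2 from by omega), ext_sum a u z (show n ≤ n+2 from by omega)]
  -- exp/cos relations
  have hre : 2 * ((Real.cos φ : ℝ) : ℂ) * Complex.exp (((n+1:ℕ):ℂ) * Complex.I * (φ:ℂ))
      = Complex.exp (((n+2:ℕ):ℂ) * Complex.I * (φ:ℂ)) * (2 - z) := by
    rw [Complex.ofReal_cos, Complex.cos, hzdef]
    have e1 : Complex.exp ((φ:ℂ)*Complex.I) * Complex.exp (((n+1:ℕ):ℂ) * Complex.I * (φ:ℂ))
        = Complex.exp (((n+2:ℕ):ℂ) * Complex.I * (φ:ℂ)) := by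
      rw [← Complex.exp_add]; congr 1; push_cast; ring
    have e2 : Complex.exp (-(φ:ℂ)*Complex.I) * Complex.exp (((n+1:ℕ):ℂ) * Complex.I * (φ:ℂ))
        = Complex.exp (((n+2:ℕ):ℂ) * Complex.I * (φ:ℂ)) * Complex.exp (-(2 * Complex.I * (φ:ℂ))) := by
      rw [← Complex.exp_add, ← Complex.exp_add]; congr 1; push_cast; ring
    linear_combination e1 + e2
  have hre0 : Complex.exp (((n:ℕ):ℂ) * Complex.I * (φ:ℂ))
      = Complex.exp (((n+2:ℕ):ℂ) * Complex.I * (φ:ℂ)) * (1 - z) := by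
    rw [hzdef]
    have e3 : Complex.exp (((n+2:ℕ):ℂ) * Complex.I * (φ:ℂ)) * Complex.exp (-(2 * Complex.I * (φ:ℂ)))
        = Complex.exp (((n:ℕ):ℂ) * Complex.I * (φ:ℂ)) := by
      rw [← Complex.exp_add]; congr 1; push_cast; ring
    linear_combination - e3
  have hf1 : (((n+2).factorial : ℕ) : ℂ) = ((n:ℂ)+2) * (((n+1).factorial : ℕ) : ℂ) := by
    rw [show n+2 = (n+1)+1 from rfl, Nat.factorial_succ]; push_cast; ring
  have hf2 : (((n+1).factorial : ℕ) : ℂ) = ((n:ℂ)+1) * ((n.factorial : ℕ) : ℂ) := by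
    rw [Nat.factorial_succ]; push_cast; ring
  have hfn : ((n.factorial : ℕ) : ℂ) ≠ 0 := Nat.cast_ne_zero.mpr n.factorial_ne_zero
  have hfn1 : (((n+1).factorial : ℕ) : ℂ) ≠ 0 := Nat.cast_ne_zero.mpr (n+1).factorial_ne_zero
  have hfn2 : (((n+2).factorial : ℕ) : ℂ) ≠ 0 := Nat.cast_ne_zero.mpr (n+2).factorial_ne_zero
  set E := Complex.exp (((n+2:ℕ):ℂ) * Complex.I * (φ:ℂ)) with hE
  have hM1c : ((n:ℂ)+1) ≠ 0 := by
    have : ((n+1:ℕ):ℂ) ≠ 0 := Nat.cast_ne_zero.mpr (by omega)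
    push_cast at this; exact this
  have hM2c : ((n:ℂ)+2) ≠ 0 := by
    have : ((n+2:ℕ):ℂ) ≠ 0 := Nat.cast_ne_zero.mpr (by omega)
    push_cast at this; exact this
  rw [hf1]
  have key1 : ∀ S : ℂ, ((n:ℂ)+1) * ((n:ℂ)+2) * (E / (((n:ℂ)+2) * (((n+1).factorial : ℕ) : ℂ)) * S)
      = E / (((n:ℂ)+2) * (((n+1).factorial : ℕ) : ℂ)) * (((n:ℂ)+1)*((n:ℂ)+2) * S) := by
    intro S; ring
  have key2 : ∀ S : ℂ, 2 * ((Real.cos φ : ℝ) : ℂ) * ((n:ℂ)+1) * (2*a+(n:ℂ)+1) *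
        (Complex.exp (((n+1:ℕ):ℂ) * Complex.I * (φ:ℂ)) / (((n+1).factorial : ℕ) : ℂ) * S)
      = E / (((n:ℂ)+2) * (((n+1).factorial : ℕ) : ℂ)) * (((n:ℂ)+1)*((n:ℂ)+2)*(2*a+(n:ℂ)+1)*(2-z) * S) :=
    fun S => keyAux2 a z _ _ E _ _ S hfn1 hM2c hre
  have key3 : ∀ S : ℂ, (2*a+(n:ℂ)) * (2*a+(n:ℂ)+1) *
        (Complex.exp (((n:ℕ):ℂ) * Complex.I * (φ:ℂ)) / ((n.factorial : ℕ) : ℂ) * S)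
      = E / (((n:ℂ)+2) * (((n+1).factorial : ℕ) : ℂ)) * (((n:ℂ)+1)*((n:ℂ)+2)*(2*a+(n:ℂ))*(2*a+(n:ℂ)+1)*(1-z) * S) :=
    fun S => keyAux3 a z _ E _ _ _ S hfn hfn1 hM2c hf2 hre0
  rw [key1, key2, key3, ← mul_sub, ← mul_add]
  congr 1
  rw [Finset.mul_sum, Finset.mul_sum, Finset.mul_sum,
      ← Finset.sum_sub_distrib, ← Finset.sum_add_distrib]
  apply Finset.sum_congr rfl
  intro j hj
  have hjle : j ≤ n+2 := by simp at hj; omega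
  linear_combination (poch u j) * coeff_id a z n j hjle
end
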